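/- Let L be a 2-dimensional left ideal of Λ which is different from soc Λ. Then either L is contained in U(1,−1,0) = Λ(x−y) + soc Λ and L is isomorphic to Λ(x−y) as a left Λ-module, or L is contained in U(0,0,1) = Λz + soc Λ and L is isomorphic to Λz as a left Λ-module. -/

import Mathlib

open CategoryTheory Limits Opposite

/-- The algebra `Λ = Λ(q)` of Ringel–Zhang: a `k`-algebra with distinguished elements
`x, y, z` satisfying the defining relations
`x² = y² = z² = 0`, `yz = 0`, `xy + q·yx = 0`, `xz = zx`, `zy = zx`,
and admitting the `k`-basis `{1, x, y, z, yx, zx}`.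
Any such algebra is canonically isomorphic to the quotient of the free algebra
`k⟨x,y,z⟩` by the two-sided ideal generated by these relations. -/
structure LambdaAlg (k : Type) [Field k] (q : k) (Λ : Type) [Ring Λ] [Algebra k Λ] :
    Type where
  x : Λ
  y : Λ
  z : Λ
  hxx : x * x = 0
  hyy : y * y = 0
  hzz : z * z = 0
  hyz : y * z = 0
  hxy : x * y + q • (y * x) = 0
  hxz : x * z - z * x = 0
  hzy : z * y - z * x = 0
  basis : Module.Basis (Fin 6) k Λ
  hb0 : basis 0 = 1
  hb1 : basis 1 = x
  hb2 : basis 2 = y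
  hb3 : basis 3 = z
  hb4 : basis 4 = y * x
  hb5 : basis 5 = z * x

namespace LambdaAlg

variable {k : Type} [Field k] {q : k} {Λ : Type} [Ring Λ] [Algebra k Λ]

/-- The element `ax + by + cz` of `Λ`. -/
def w (D : LambdaAlg k q Λ) (a b c : k) : Λ := a • D.x + b • D.y + c • D.z

/-- The left ideal `U(a,b,c) = Λ(ax+by+cz) + Λ·yx + Λ·zx` of `Λ`. -/
def U (D : LambdaAlg k q Λ) (a b c : k) : Submodule Λ Λ :=
  Submodule.span Λ {D.w a b c, D.y * D.x, D.z * D.x}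

/-- The left `Λ`-module `M(a,b,c) = Λ/U(a,b,c)`. -/
abbrev M (D : LambdaAlg k q Λ) (a b c : k) : Type := Λ ⧸ D.U a b c

/-- The right ideal `U′(a,b,c) = (ax+by+cz)Λ + yx·Λ + zx·Λ` of `Λ`,
viewed as a `Λᵐᵒᵖ`-submodule of `Λ`. -/
def U' (D : LambdaAlg k q Λ) (a b c : k) : Submodule Λᵐᵒᵖ Λ :=
  Submodule.span Λᵐᵒᵖ {D.w a b c, D.y * D.x, D.z * D.x}

/-- The right `Λ`-module `M′(a,b,c) = Λ/U′(a,b,c)` (a module over `Λᵐᵒᵖ`). -/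
abbrev M' (D : LambdaAlg k q Λ) (a b c : k) : Type := Λ ⧸ D.U' a b c

/-- The `k`-subspace `{m ∈ M : x·m = y·m = z·m = 0}` of a left `Λ`-module `M`;
since `x, y, z` generate `rad Λ` and every simple `Λ`-module is isomorphic to `k`,
this is the socle of `M`. -/
def ann (D : LambdaAlg k q Λ) (M : Type) [AddCommGroup M] [Module k M] [Module Λ M]
    [IsScalarTower k Λ M] : Submodule k M where
  carrier := {m | D.x • m = 0 ∧ D.y • m = 0 ∧ D.z • m = 0}
  add_mem' := by
    rintro a b ⟨h1, h2, h3⟩ ⟨g1, g2, g3⟩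
    simp [smul_add, h1, h2, h3, g1, g2, g3]
  zero_mem' := by simp
  smul_mem' := by
    rintro a m ⟨h1, h2, h3⟩
    refine ⟨?_, ?_, ?_⟩ <;> rw [smul_comm] <;> simp [h1, h2, h3]

/-- The submodule `(rad Λ)·M = x·M + y·M + z·M` of a left `Λ`-module `M`. -/
def radM (D : LambdaAlg k q Λ) (M : Type) [AddCommGroup M] [Module Λ M] :
    Submodule Λ M :=
  Submodule.span Λ
    (Set.range (fun m : M => D.x • m) ∪ Set.range (fun m : M => D.y • m) ∪
      Set.range (fun m : M => D.z • m))

end LambdaAlg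

/-- A module is indecomposable if it is nonzero and is not the direct sum of two
nonzero submodules. -/
def IsIndecomposable (R : Type) [Ring R] (M : Type) [AddCommGroup M] [Module R M] :
    Prop :=
  Nontrivial M ∧
    ∀ N₁ N₂ : Submodule R M, N₁ ⊓ N₂ = ⊥ → N₁ ⊔ N₂ = ⊤ → N₁ = ⊥ ∨ N₂ = ⊥

/-- A module is torsionless if it admits an injective linear map into a finite free
module. -/
def IsTorsionless (R : Type) [Ring R] (M : Type) [AddCommGroup M] [Module R M] : Prop :=
  ∃ (n : ℕ) (f : M →ₗ[R] (Fin n → R)), Function.Injective f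

/-- The canonical evaluation map `M → M** = Hom_{Λᵒᵖ}(Hom_Λ(M, Λ), Λ)`,
sending `m` to `f ↦ f m`. -/
def evalMap (Λ : Type) [Ring Λ] (M : Type) [AddCommGroup M] [Module Λ M] :
    M → ((M →ₗ[Λ] Λ) →ₗ[Λᵐᵒᵖ] Λ) := fun m =>
  { toFun := fun f => f m
    map_add' := fun _ _ => rfl
    map_smul' := fun _ _ => rfl }

/-- The transformation `ω′(a,b,c) = (a, q⁻¹b, −((a+q⁻¹b)/a)·c)` on triples. -/
def omegaPrime {k : Type} [Field k] (q : k) (t : k × k × k) : k × k × k :=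
  (t.1, q⁻¹ * t.2.1, -((t.1 + q⁻¹ * t.2.1) / t.1) * t.2.2)

namespace LambdaAlg
variable {k : Type} [Field k] {q : k} {Λ : Type} [Ring Λ] [Algebra k Λ] (D : LambdaAlg k q Λ)

lemma hxy' : D.x * D.y = (-q) • (D.y * D.x) := by
  have := D.hxy; rw [neg_smul]; linear_combination (norm := module) this
lemma hxz' : D.x * D.z = D.z * D.x := by linear_combination (norm := noncomm_ring) D.hxz
lemma hzy' : D.z * D.y = D.z * D.x := by linear_combination (norm := noncomm_ring) D.hzy
lemma hxyx : D.x * (D.y * D.x) = 0 := by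
  rw [← mul_assoc, D.hxy', smul_mul_assoc, mul_assoc, D.hxx, mul_zero, smul_zero]
lemma hxzx : D.x * (D.z * D.x) = 0 := by
  rw [← mul_assoc, D.hxz', mul_assoc, D.hxx, mul_zero]
lemma hyyx : D.y * (D.y * D.x) = 0 := by rw [← mul_assoc, D.hyy, zero_mul]
lemma hyzx : D.y * (D.z * D.x) = 0 := by rw [← mul_assoc, D.hyz, zero_mul]
lemma hzyx : D.z * (D.y * D.x) = 0 := by
  rw [← mul_assoc, D.hzy', mul_assoc, D.hxx, mul_zero]
lemma hzzx : D.z * (D.z * D.x) = 0 := by rw [← mul_assoc, D.hzz, zero_mul]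

/-- coefficient vector to element -/
def E (c : Fin 6 → k) : Λ :=
  c 0 • 1 + c 1 • D.x + c 2 • D.y + c 3 • D.z + c 4 • (D.y * D.x) + c 5 • (D.z * D.x)

/-- multiplication in coordinates -/
def mulc (q : k) (c d : Fin 6 → k) : Fin 6 → k
  | 0 => c 0 * d 0
  | 1 => c 0 * d 1 + c 1 * d 0
  | 2 => c 0 * d 2 + c 2 * d 0
  | 3 => c 0 * d 3 + c 3 * d 0
  | 4 => c 0 * d 4 + c 4 * d 0 - q * (c 1 * d 2) + c 2 * d 1
  | 5 => c 0 * d 5 + c 5 * d 0 + c 1 * d 3 + c 3 * d 1 + c 3 * d 2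

@[simp] lemma mulc0 (q : k) (c d : Fin 6 → k) : mulc q c d 0 = c 0 * d 0 := rfl
@[simp] lemma mulc1 (q : k) (c d : Fin 6 → k) : mulc q c d 1 = c 0 * d 1 + c 1 * d 0 := rfl
@[simp] lemma mulc2 (q : k) (c d : Fin 6 → k) : mulc q c d 2 = c 0 * d 2 + c 2 * d 0 := rfl
@[simp] lemma mulc3 (q : k) (c d : Fin 6 → k) : mulc q c d 3 = c 0 * d 3 + c 3 * d 0 := rfl
@[simp] lemma mulc4 (q : k) (c d : Fin 6 → k) : mulc q c d 4 = c 0 * d 4 + c 4 * d 0 - q * (c 1 * d 2) + c 2 * d 1 := rfl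
@[simp] lemma mulc5 (q : k) (c d : Fin 6 → k) : mulc q c d 5 = c 0 * d 5 + c 5 * d 0 + c 1 * d 3 + c 3 * d 1 + c 3 * d 2 := rfl

lemma E_mul (c d : Fin 6 → k) : D.E c * D.E d = D.E (mulc q c d) := by
  simp only [E, mulc, mul_add, add_mul, smul_mul_assoc, mul_smul_comm, mul_assoc,
    one_mul, mul_one, D.hxx, D.hyy, D.hzz, D.hyz, D.hxy', D.hxz', D.hzy',
    D.hxyx, D.hxzx, D.hyyx, D.hyzx, D.hzyx, D.hzzx,
    smul_zero, mul_zero, zero_mul,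
    mulc0, mulc1, mulc2, mulc3, mulc4, mulc5]
  module
end LambdaAlg
namespace LambdaAlg
variable {k : Type} [Field k] {q : k} {Λ : Type} [Ring Λ] [Algebra k Λ] (D : LambdaAlg k q Λ)

lemma E_eq_sum (c : Fin 6 → k) : D.E c = ∑ i, c i • D.basis i := by
  rw [Fin.sum_univ_six, D.hb0, D.hb1, D.hb2, D.hb3, D.hb4, D.hb5]; rfl

lemma repr_E (c : Fin 6 → k) : ⇑(D.basis.repr (D.E c)) = c := by
  rw [E_eq_sum]; exact D.basis.repr_sum_self c

lemma E_repr (u : Λ) : D.E (fun i => D.basis.repr u i) = u := by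
  rw [E_eq_sum]; exact D.basis.sum_repr u

lemma E_zero_iff (c : Fin 6 → k) : D.E c = 0 ↔ c = 0 := by
  constructor
  · intro h
    have := D.repr_E c
    rw [h] at this
    simpa using this.symm
  · rintro rfl; simp [E]

lemma E_one : D.E (fun i => if i = 0 then 1 else 0) = 1 := by
  simp [E]

end LambdaAlg
namespace LambdaAlg
variable {k : Type} [Field k] {q : k} {Λ : Type} [Ring Λ] [Algebra k Λ] (D : LambdaAlg k q Λ)

lemma exists_left_inv (c : Fin 6 → k) (h : c 0 ≠ 0) : ∃ v : Λ, v * D.E c = 1 := by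
  set d : Fin 6 → k := fun i => match i with
    | 0 => 1 / c 0
    | 1 => -(c 1) / (c 0)^2
    | 2 => -(c 2) / (c 0)^2
    | 3 => -(c 3) / (c 0)^2
    | 4 => (-(c 4 * c 0) - (q - 1) * (c 1 * c 2)) / (c 0)^3
    | 5 => (-(c 5 * c 0) + 2 * (c 1 * c 3) + c 2 * c 3) / (c 0)^3
    with hd
  refine ⟨D.E d, ?_⟩
  rw [D.E_mul]
  have h0 : mulc q d c 0 = 1 := by rw [mulc0, hd]; field_simp
  have h1 : mulc q d c 1 = 0 := by rw [mulc1, hd]; field_simp; ring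
  have h2 : mulc q d c 2 = 0 := by rw [mulc2, hd]; field_simp; ring
  have h3 : mulc q d c 3 = 0 := by rw [mulc3, hd]; field_simp; ring
  have h4 : mulc q d c 4 = 0 := by rw [mulc4, hd]; field_simp; ring
  have h5 : mulc q d c 5 = 0 := by rw [mulc5, hd]; field_simp; ring_nf
  rw [E, h0, h1, h2, h3, h4, h5]
  simp
end LambdaAlg
namespace LambdaAlg
variable {k : Type} [Field k] {q : k} {Λ : Type} [Ring Λ] [Algebra k Λ] (D : LambdaAlg k q Λ)

lemma x_mul (u : Λ) : D.x * u = (D.basis.repr u 0) • D.x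
    + (-(q * D.basis.repr u 2)) • (D.y * D.x) + (D.basis.repr u 3) • (D.z * D.x) := by
  have hx : D.x = D.E (fun i => if i = 1 then 1 else 0) := by simp [E]
  conv_lhs => rw [hx, ← D.E_repr u, D.E_mul]
  rw [E]
  simp only [mulc0, mulc1, mulc2, mulc3, mulc4, mulc5]
  simp only [Fin.reduceEq, reduceIte]
  module

lemma y_mul (u : Λ) : D.y * u = (D.basis.repr u 0) • D.y
    + (D.basis.repr u 1) • (D.y * D.x) := by
  have hy : D.y = D.E (fun i => if i = 2 then 1 else 0) := by simp [E]
  conv_lhs => rw [hy, ← D.E_repr u, D.E_mul]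
  rw [E]
  simp only [mulc0, mulc1, mulc2, mulc3, mulc4, mulc5]
  simp only [Fin.reduceEq, reduceIte]
  module

lemma z_mul (u : Λ) : D.z * u = (D.basis.repr u 0) • D.z
    + (D.basis.repr u 1 + D.basis.repr u 2) • (D.z * D.x) := by
  have hz : D.z = D.E (fun i => if i = 3 then 1 else 0) := by simp [E]
  conv_lhs => rw [hz, ← D.E_repr u, D.E_mul]
  rw [E]
  simp only [mulc0, mulc1, mulc2, mulc3, mulc4, mulc5]
  simp only [Fin.reduceEq, reduceIte]
  module

lemma mul_yx (l : Λ) : l * (D.y * D.x) = (D.basis.repr l 0) • (D.y * D.x) := by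
  have hy : D.y * D.x = D.E (fun i => if i = 4 then 1 else 0) := by simp [E]
  conv_lhs => rw [hy, ← D.E_repr l, D.E_mul]
  rw [E]
  simp only [mulc0, mulc1, mulc2, mulc3, mulc4, mulc5]
  simp only [Fin.reduceEq, reduceIte]
  module

lemma mul_zx (l : Λ) : l * (D.z * D.x) = (D.basis.repr l 0) • (D.z * D.x) := by
  have hz : D.z * D.x = D.E (fun i => if i = 5 then 1 else 0) := by simp [E]
  conv_lhs => rw [hz, ← D.E_repr l, D.E_mul]
  rw [E]
  simp only [mulc0, mulc1, mulc2, mulc3, mulc4, mulc5]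
  simp only [Fin.reduceEq, reduceIte]
  module

lemma repr_yx : ⇑(D.basis.repr (D.y * D.x)) = (fun i => if i = 4 then 1 else 0) := by
  have hy : D.y * D.x = D.E (fun i => if i = 4 then 1 else 0) := by simp [E]
  rw [hy, D.repr_E]

lemma repr_zx : ⇑(D.basis.repr (D.z * D.x)) = (fun i => if i = 5 then 1 else 0) := by
  have hz : D.z * D.x = D.E (fun i => if i = 5 then 1 else 0) := by simp [E]
  rw [hz, D.repr_E]

lemma funzero {m : Fin 6 → k} (h0 : m 0 = 0) (h1 : m 1 = 0) (h2 : m 2 = 0)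
    (h3 : m 3 = 0) (h4 : m 4 = 0) (h5 : m 5 = 0) : m = 0 := by
  funext i; fin_cases i <;> assumption

end LambdaAlg



lemma equiv_aux {Λ : Type} [Ring Λ] (u g : Λ) (L : Submodule Λ Λ)
    (hspan : L = Submodule.span Λ {u})
    (hker : ∀ l : Λ, l * u = 0 ↔ l * g = 0) :
    Nonempty (↥L ≃ₗ[Λ] ↥(Submodule.span Λ {g})) := by
  have hker' : LinearMap.ker (LinearMap.toSpanSingleton Λ Λ u)
      = LinearMap.ker (LinearMap.toSpanSingleton Λ Λ g) := by
    ext l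
    simpa [LinearMap.mem_ker, LinearMap.toSpanSingleton_apply, smul_eq_mul] using hker l
  exact ⟨(LinearEquiv.ofEq _ _ (hspan.trans (LinearMap.span_singleton_eq_range Λ Λ u))).trans <|
    ((LinearMap.quotKerEquivRange (LinearMap.toSpanSingleton Λ Λ u)).symm.trans <|
      (Submodule.quotEquivOfEq _ _ hker').trans <|
      LinearMap.quotKerEquivRange (LinearMap.toSpanSingleton Λ Λ g)).trans <|
    LinearEquiv.ofEq _ _ (LinearMap.span_singleton_eq_range Λ Λ g).symm⟩

lemma span_eq_aux {k Λ : Type} [Field k] [Ring Λ] [Algebra k Λ] [Module.Finite k Λ]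
    (L : Submodule Λ Λ) (hL2 : Module.finrank k ↥(L.restrictScalars k) = 2)
    (u s : Λ) (hu : u ∈ L) (hs : s ∈ L)
    (hsspan : s ∈ Submodule.span Λ {u}) (hind : LinearIndependent k ![u, s]) :
    L = Submodule.span Λ {u} := by
  refine le_antisymm ?_ (by rw [Submodule.span_le, Set.singleton_subset_iff]; exact hu)
  have hsp_le : Submodule.span k (Set.range ![u, s]) ≤ L.restrictScalars k := by
    rw [Submodule.span_le]
    rintro t ⟨i, rfl⟩
    fin_cases i <;> simp only [Submodule.coe_restrictScalars, SetLike.mem_coe,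
      Matrix.cons_val_zero, Matrix.cons_val_one, Matrix.head_cons] <;>
      first | exact hu | exact hs
  have heq : Submodule.span k (Set.range ![u, s]) = L.restrictScalars k :=
    Submodule.eq_of_le_of_finrank_le hsp_le
      (by rw [hL2, finrank_span_eq_card hind]; norm_num)
  intro v hv
  have hv' : v ∈ Submodule.span k (Set.range ![u, s]) := by rw [heq]; exact hv
  have hfin : Submodule.span k (Set.range ![u, s]) ≤
      (Submodule.span Λ {u}).restrictScalars k := by
    rw [Submodule.span_le]
    rintro t ⟨i, rfl⟩
    fin_cases i
    · simpa using Submodule.mem_span_singleton_self u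
    · simpa using hsspan
  exact hfin hv'

open LambdaAlg in
/-- Any 2-dimensional left ideal `L ≠ soc Λ` is contained in `U(1,−1,0)` and
isomorphic to `Λ(x−y)`, or contained in `U(0,0,1)` and isomorphic to `Λz`. -/
theorem statement2 (k : Type) [Field k] (q : k) (hq : q ≠ 0)
    (Λ : Type) [Ring Λ] [Algebra k Λ] (D : LambdaAlg k q Λ)
    (L : Submodule Λ Λ) (hL : Module.finrank k ↥L = 2)
    (hLsoc : L ≠ Submodule.span Λ {D.y * D.x, D.z * D.x}) :
    (L ≤ D.U 1 (-1) 0 ∧ Nonempty (↥L ≃ₗ[Λ] ↥(Submodule.span Λ {D.x - D.y})))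
    ∨ (L ≤ D.U 0 0 1 ∧ Nonempty (↥L ≃ₗ[Λ] ↥(Submodule.span Λ {D.z}))) := by
  classical
  haveI : Module.Finite k Λ := Module.Finite.of_basis D.basis
  have memrad : ∀ v ∈ L, D.basis.repr v 0 = 0 := by
    intro v hv
    by_contra hne
    obtain ⟨w, hw⟩ := D.exists_left_inv (fun i => D.basis.repr v i) hne
    rw [D.E_repr] at hw
    have h1 : (1:Λ) ∈ L := by
      have := L.smul_mem w hv; rwa [smul_eq_mul, hw] at this
    have hLtop : L = ⊤ := by
      rw [Submodule.eq_top_iff']; intro a; simpa using L.smul_mem a h1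
    rw [hLtop,
      LinearEquiv.finrank_eq ((Submodule.topEquiv (R := Λ) (M := Λ)).restrictScalars k),
      Module.finrank_eq_card_basis D.basis] at hL
    simp at hL
  have hL2 : Module.finrank k ↥(L.restrictScalars k) = 2 := hL
  have key : ∀ v ∈ L, D.y * D.x ∈ L → D.z * D.x ∈ L →
      ¬(D.basis.repr v 1 = 0 ∧ D.basis.repr v 2 = 0 ∧ D.basis.repr v 3 = 0) → False := by
    intro v hv hyxL hzxL hne
    have hind : LinearIndependent k ![v, D.y * D.x, D.z * D.x] := by
      rw [Fintype.linearIndependent_iff]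
      intro g hg
      have hcoord : ∀ j : Fin 6, ((g 0 * D.basis.repr v j
          + if j = 4 then g 1 else 0) + if j = 5 then g 2 else 0) = 0 := by
        intro j
        have h := congrArg (fun t => D.basis.repr t j) hg
        simpa [Fin.sum_univ_three, D.repr_yx, D.repr_zx, smul_eq_mul, mul_comm] using h
      have hg0 : g 0 = 0 := by
        rcases (by tauto : ¬ D.basis.repr v 1 = 0 ∨ ¬ D.basis.repr v 2 = 0
            ∨ ¬ D.basis.repr v 3 = 0) with h|h|h
        · have h1 := hcoord 1
          simp only [Fin.reduceEq, reduceIte, add_zero] at h1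
          exact (mul_eq_zero.mp h1).resolve_right h
        · have h1 := hcoord 2
          simp only [Fin.reduceEq, reduceIte, add_zero] at h1
          exact (mul_eq_zero.mp h1).resolve_right h
        · have h1 := hcoord 3
          simp only [Fin.reduceEq, reduceIte, add_zero] at h1
          exact (mul_eq_zero.mp h1).resolve_right h
      have hg1 : g 1 = 0 := by
        have h1 := hcoord 4
        simp only [Fin.reduceEq, reduceIte, add_zero, hg0, zero_mul, zero_add] at h1
        exact h1
      have hg2 : g 2 = 0 := by
        have h1 := hcoord 5
        simp only [Fin.reduceEq, reduceIte, add_zero, hg0, zero_mul, zero_add] at h1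
        exact h1
      intro i; fin_cases i <;> assumption
    have hle : Submodule.span k (Set.range ![v, D.y * D.x, D.z * D.x])
        ≤ L.restrictScalars k := by
      rw [Submodule.span_le]
      rintro t ⟨i, rfl⟩
      fin_cases i <;> simp only [Submodule.coe_restrictScalars, SetLike.mem_coe,
        Matrix.cons_val_zero, Matrix.cons_val_one, Matrix.head_cons,
        Matrix.cons_val_two, Matrix.tail_cons] <;>
        first | exact hv | exact hyxL | exact hzxL
    have h3 : (3:ℕ) ≤ 2 := by
      calc (3:ℕ)
          = Module.finrank k ↥(Submodule.span k (Set.range ![v, D.y * D.x, D.z * D.x])) := by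
            rw [finrank_span_eq_card hind]; rfl
        _ ≤ Module.finrank k ↥(L.restrictScalars k) := Submodule.finrank_mono hle
        _ = 2 := hL2
    omega
  have hexu : ∃ u ∈ L,
      ¬(D.basis.repr u 1 = 0 ∧ D.basis.repr u 2 = 0 ∧ D.basis.repr u 3 = 0) := by
    by_contra hall
    push_neg at hall
    apply hLsoc
    have stable : ∀ (l : Λ), ∀ w ∈ Submodule.span k ({D.y * D.x, D.z * D.x} : Set Λ),
        l • w ∈ Submodule.span k ({D.y * D.x, D.z * D.x} : Set Λ) := by
      intro l w hw
      induction hw using Submodule.span_induction with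
      | mem t ht =>
        rw [Set.mem_insert_iff, Set.mem_singleton_iff] at ht
        rcases ht with rfl | rfl
        · rw [smul_eq_mul, D.mul_yx]
          exact Submodule.smul_mem _ _ (Submodule.subset_span (by simp))
        · rw [smul_eq_mul, D.mul_zx]
          exact Submodule.smul_mem _ _ (Submodule.subset_span (by simp))
      | zero => simp
      | add a b _ _ ha hb => rw [smul_add]; exact add_mem ha hb
      | smul c w _ hw => rw [smul_comm]; exact Submodule.smul_mem _ _ hw
    have hsetle : ∀ w ∈ Submodule.span Λ ({D.y * D.x, D.z * D.x} : Set Λ),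
        w ∈ Submodule.span k ({D.y * D.x, D.z * D.x} : Set Λ) := by
      intro w hw
      induction hw using Submodule.span_induction with
      | mem t ht => exact Submodule.subset_span ht
      | zero => simp
      | add a b _ _ ha hb => exact add_mem ha hb
      | smul c w _ hw => exact stable c w hw
    have hLle : L ≤ Submodule.span Λ ({D.y * D.x, D.z * D.x} : Set Λ) := by
      intro v hv
      obtain ⟨h1, h2, h3⟩ := hall v hv
      have h0 := memrad v hv
      have hveq : v = (D.basis.repr v 4) • (D.y * D.x)
          + (D.basis.repr v 5) • (D.z * D.x) := by
        conv_lhs => rw [← D.E_repr v]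
        rw [E, h0, h1, h2, h3]
        module
      rw [hveq]
      exact add_mem (Submodule.smul_of_tower_mem _ _ (Submodule.subset_span (by simp)))
        (Submodule.smul_of_tower_mem _ _ (Submodule.subset_span (by simp)))
    have hfr : Module.finrank k
        ↥((Submodule.span Λ ({D.y * D.x, D.z * D.x} : Set Λ)).restrictScalars k) ≤ 2 := by
      have hle2 : (Submodule.span Λ ({D.y * D.x, D.z * D.x} : Set Λ)).restrictScalars k ≤
          Submodule.span k ({D.y * D.x, D.z * D.x} : Set Λ) := fun w hw => hsetle w hw
      calc Module.finrank k
            ↥((Submodule.span Λ ({D.y * D.x, D.z * D.x} : Set Λ)).restrictScalars k)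
          ≤ Module.finrank k ↥(Submodule.span k ({D.y * D.x, D.z * D.x} : Set Λ)) :=
            Submodule.finrank_mono hle2
        _ ≤ ({D.y * D.x, D.z * D.x} : Set Λ).toFinset.card := finrank_span_le_card _
        _ ≤ 2 := by
            rw [Set.toFinset_insert]
            exact (Finset.card_insert_le _ _).trans (by simp)
    have heq : L.restrictScalars k =
        (Submodule.span Λ ({D.y * D.x, D.z * D.x} : Set Λ)).restrictScalars k :=
      Submodule.eq_of_le_of_finrank_le (fun w hw => hLle hw) (by rw [hL2]; exact hfr)
    exact Submodule.restrictScalars_injective k Λ Λ heq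
  obtain ⟨u, hu, hne⟩ := hexu
  have h0 := memrad u hu
  have hyu : D.y * u = (D.basis.repr u 1) • (D.y * D.x) := by
    rw [D.y_mul, h0, zero_smul, zero_add]
  have hzu : D.z * u = (D.basis.repr u 1 + D.basis.repr u 2) • (D.z * D.x) := by
    rw [D.z_mul, h0, zero_smul, zero_add]
  have hxu : D.x * u = (-(q * D.basis.repr u 2)) • (D.y * D.x)
      + (D.basis.repr u 3) • (D.z * D.x) := by
    rw [D.x_mul, h0, zero_smul, zero_add]
  have hyuL : D.y * u ∈ L := by rw [← smul_eq_mul]; exact L.smul_mem _ hu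
  have hzuL : D.z * u ∈ L := by rw [← smul_eq_mul]; exact L.smul_mem _ hu
  have hxuL : D.x * u ∈ L := by rw [← smul_eq_mul]; exact L.smul_mem _ hu
  by_cases hA : D.basis.repr u 1 = 0
  · -- case a = 0 : the U(0,0,1) branch
    right
    have hB : D.basis.repr u 2 = 0 := by
      by_contra hB
      have hzxL : D.z * D.x ∈ L := by
        have h2 := L.smul_of_tower_mem (D.basis.repr u 1 + D.basis.repr u 2)⁻¹ hzuL
        rwa [hzu, smul_smul, inv_mul_cancel₀ (by rw [hA, zero_add]; exact hB), one_smul] at h2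
      have hyxL : D.y * D.x ∈ L := by
        have h1 : D.x * u - (D.basis.repr u 3) • (D.z * D.x) ∈ L :=
          sub_mem hxuL (Submodule.smul_of_tower_mem _ _ hzxL)
        have h2 : D.x * u - (D.basis.repr u 3) • (D.z * D.x)
            = (-(q * D.basis.repr u 2)) • (D.y * D.x) := by rw [hxu]; module
        rw [h2] at h1
        have h3 := L.smul_of_tower_mem (-(q * D.basis.repr u 2))⁻¹ h1
        rwa [smul_smul, inv_mul_cancel₀ (by simp [hq, hB]), one_smul] at h3
      exact key u hu hyxL hzxL hne
    have hC : D.basis.repr u 3 ≠ 0 := by tauto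
    have hxu' : D.x * u = (D.basis.repr u 3) • (D.z * D.x) := by rw [hxu, hB]; module
    have hzxL : D.z * D.x ∈ L := by
      have h2 := L.smul_of_tower_mem (D.basis.repr u 3)⁻¹ hxuL
      rwa [hxu', smul_smul, inv_mul_cancel₀ hC, one_smul] at h2
    have hzx_spanu : D.z * D.x ∈ Submodule.span Λ {u} := by
      have h1 : D.x • u ∈ Submodule.span Λ {u} :=
        Submodule.smul_mem _ _ (Submodule.mem_span_singleton_self u)
      have h2 := Submodule.smul_of_tower_mem (Submodule.span Λ {u})
        (D.basis.repr u 3)⁻¹ h1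
      rwa [smul_eq_mul, hxu', smul_smul, inv_mul_cancel₀ hC, one_smul] at h2
    have hind : LinearIndependent k ![u, D.z * D.x] := by
      rw [Fintype.linearIndependent_iff]
      intro g hg
      have hcoord : ∀ j : Fin 6,
          (g 0 * D.basis.repr u j + if j = 5 then g 1 else 0) = 0 := by
        intro j
        have h := congrArg (fun t => D.basis.repr t j) hg
        simpa [Fin.sum_univ_two, D.repr_zx, smul_eq_mul, mul_comm] using h
      have hg0 : g 0 = 0 := by
        have h1 := hcoord 3
        simp only [Fin.reduceEq, reduceIte, add_zero] at h1
        exact (mul_eq_zero.mp h1).resolve_right hC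
      have hg1 : g 1 = 0 := by
        have h1 := hcoord 5
        simp only [Fin.reduceEq, reduceIte, hg0, zero_mul, zero_add] at h1
        exact h1
      intro i; fin_cases i <;> assumption
    have hspan : L = Submodule.span Λ {u} :=
      span_eq_aux L hL2 u (D.z * D.x) hu hzxL hzx_spanu hind
    constructor
    · -- L ≤ U 0 0 1
      rw [hspan, Submodule.span_le, Set.singleton_subset_iff]
      have hweq : D.w 0 0 1 = D.z := by rw [LambdaAlg.w]; module
      have hu_eq : u = (D.basis.repr u 3) • D.z + (D.basis.repr u 4) • (D.y * D.x)
          + (D.basis.repr u 5) • (D.z * D.x) := by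
        conv_lhs => rw [← D.E_repr u]
        rw [E, h0, hA, hB]
        module
      rw [LambdaAlg.U, hu_eq]
      refine add_mem (add_mem ?_ ?_) ?_
      · exact Submodule.smul_of_tower_mem _ _
          (Submodule.subset_span (Set.mem_insert_iff.mpr (Or.inl hweq.symm)))
      · exact Submodule.smul_of_tower_mem _ _ (Submodule.subset_span (by simp))
      · exact Submodule.smul_of_tower_mem _ _ (Submodule.subset_span (by simp))
    · -- iso with Λz
      apply equiv_aux u D.z L hspan
      intro l
      have hgl : D.z = D.E (fun i => if i = 3 then 1 else 0) := by simp [E]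
      have e1 : l * u = D.E (mulc q (fun i => D.basis.repr l i)
          (fun i => D.basis.repr u i)) := by
        conv_lhs => rw [← D.E_repr l, ← D.E_repr u, D.E_mul]
      have e2 : l * D.z = D.E (mulc q (fun i => D.basis.repr l i)
          (fun i => if i = 3 then 1 else 0)) := by
        conv_lhs => rw [← D.E_repr l, hgl, D.E_mul]
      rw [e1, e2, D.E_zero_iff, D.E_zero_iff]
      constructor
      · intro h
        have c3 := congrFun h 3
        have c5 := congrFun h 5
        simp only [mulc3, mulc5, Pi.zero_apply, h0, hA, hB, mul_zero, add_zero, zero_add] at c3 c5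
        have hl0 : D.basis.repr l 0 = 0 := (mul_eq_zero.mp c3).resolve_right hC
        rw [hl0, zero_mul, zero_add] at c5
        have hl1 : D.basis.repr l 1 = 0 := (mul_eq_zero.mp c5).resolve_right hC
        refine funzero ?_ ?_ ?_ ?_ ?_ ?_ <;>
          simp [mulc0, mulc1, mulc2, mulc3, mulc4, mulc5, hl0, hl1, Fin.reduceEq]
      · intro h
        have c3 := congrFun h 3
        have c5 := congrFun h 5
        simp only [mulc3, mulc5, Pi.zero_apply, Fin.reduceEq, reduceIte, mul_one, mul_zero,
          add_zero, zero_add] at c3 c5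
        refine funzero ?_ ?_ ?_ ?_ ?_ ?_ <;>
          simp [mulc0, mulc1, mulc2, mulc3, mulc4, mulc5, h0, hA, hB, c3, c5]
  · -- case a ≠ 0 : the U(1,-1,0) branch
    left
    have hyxL : D.y * D.x ∈ L := by
      have h2 := L.smul_of_tower_mem (D.basis.repr u 1)⁻¹ hyuL
      rwa [hyu, smul_smul, inv_mul_cancel₀ hA, one_smul] at h2
    have hB : D.basis.repr u 2 = -(D.basis.repr u 1) := by
      by_contra hB
      have hsum : D.basis.repr u 1 + D.basis.repr u 2 ≠ 0 := fun h =>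
        hB (by linear_combination h)
      have hzxL : D.z * D.x ∈ L := by
        have h2 := L.smul_of_tower_mem (D.basis.repr u 1 + D.basis.repr u 2)⁻¹ hzuL
        rwa [hzu, smul_smul, inv_mul_cancel₀ hsum, one_smul] at h2
      exact key u hu hyxL hzxL hne
    have hC : D.basis.repr u 3 = 0 := by
      by_contra hC
      have hzxL : D.z * D.x ∈ L := by
        have h1 : D.x * u - (-(q * D.basis.repr u 2)) • (D.y * D.x) ∈ L :=
          sub_mem hxuL (Submodule.smul_of_tower_mem _ _ hyxL)
        have h2 : D.x * u - (-(q * D.basis.repr u 2)) • (D.y * D.x)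
            = (D.basis.repr u 3) • (D.z * D.x) := by rw [hxu]; module
        rw [h2] at h1
        have h3 := L.smul_of_tower_mem (D.basis.repr u 3)⁻¹ h1
        rwa [smul_smul, inv_mul_cancel₀ hC, one_smul] at h3
      exact key u hu hyxL hzxL hne
    have hyx_spanu : D.y * D.x ∈ Submodule.span Λ {u} := by
      have h1 : D.y • u ∈ Submodule.span Λ {u} :=
        Submodule.smul_mem _ _ (Submodule.mem_span_singleton_self u)
      have h2 := Submodule.smul_of_tower_mem (Submodule.span Λ {u})
        (D.basis.repr u 1)⁻¹ h1
      rwa [smul_eq_mul, hyu, smul_smul, inv_mul_cancel₀ hA, one_smul] at h2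
    have hind : LinearIndependent k ![u, D.y * D.x] := by
      rw [Fintype.linearIndependent_iff]
      intro g hg
      have hcoord : ∀ j : Fin 6,
          (g 0 * D.basis.repr u j + if j = 4 then g 1 else 0) = 0 := by
        intro j
        have h := congrArg (fun t => D.basis.repr t j) hg
        simpa [Fin.sum_univ_two, D.repr_yx, smul_eq_mul, mul_comm] using h
      have hg0 : g 0 = 0 := by
        have h1 := hcoord 1
        simp only [Fin.reduceEq, reduceIte, add_zero] at h1
        exact (mul_eq_zero.mp h1).resolve_right hA
      have hg1 : g 1 = 0 := by
        have h1 := hcoord 4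
        simp only [Fin.reduceEq, reduceIte, hg0, zero_mul, zero_add] at h1
        exact h1
      intro i; fin_cases i <;> assumption
    have hspan : L = Submodule.span Λ {u} :=
      span_eq_aux L hL2 u (D.y * D.x) hu hyxL hyx_spanu hind
    constructor
    · -- L ≤ U 1 (-1) 0
      rw [hspan, Submodule.span_le, Set.singleton_subset_iff]
      have hweq : D.w 1 (-1) 0 = D.x - D.y := by rw [LambdaAlg.w]; module
      have hu_eq : u = (D.basis.repr u 1) • (D.x - D.y) + (D.basis.repr u 4) • (D.y * D.x)
          + (D.basis.repr u 5) • (D.z * D.x) := by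
        conv_lhs => rw [← D.E_repr u]
        rw [E, h0, hB, hC]
        module
      rw [LambdaAlg.U, hu_eq]
      refine add_mem (add_mem ?_ ?_) ?_
      · exact Submodule.smul_of_tower_mem _ _
          (Submodule.subset_span (Set.mem_insert_iff.mpr (Or.inl hweq.symm)))
      · exact Submodule.smul_of_tower_mem _ _ (Submodule.subset_span (by simp))
      · exact Submodule.smul_of_tower_mem _ _ (Submodule.subset_span (by simp))
    · -- iso with Λ(x - y)
      apply equiv_aux u (D.x - D.y) L hspan
      intro l
      have hgl : D.x - D.y = D.E (fun i => if i = 1 then 1 else if i = 2 then -1 else 0) := by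
        rw [E]; simp only [Fin.reduceEq, reduceIte]; module
      have e1 : l * u = D.E (mulc q (fun i => D.basis.repr l i)
          (fun i => D.basis.repr u i)) := by
        conv_lhs => rw [← D.E_repr l, ← D.E_repr u, D.E_mul]
      have e2 : l * (D.x - D.y) = D.E (mulc q (fun i => D.basis.repr l i)
          (fun i => if i = 1 then 1 else if i = 2 then -1 else 0)) := by
        conv_lhs => rw [← D.E_repr l, hgl, D.E_mul]
      rw [e1, e2, D.E_zero_iff, D.E_zero_iff]
      constructor
      · intro h
        have c1 := congrFun h 1
        have c4 := congrFun h 4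
        simp only [mulc1, mulc4, Pi.zero_apply, h0, mul_zero, add_zero, zero_add] at c1 c4
        have hl0 : D.basis.repr l 0 = 0 := (mul_eq_zero.mp c1).resolve_right hA
        have hl42 : q * D.basis.repr l 1 + D.basis.repr l 2 = 0 := by
          have h5 : (q * D.basis.repr l 1 + D.basis.repr l 2) * D.basis.repr u 1 = 0 := by
            linear_combination c4 - D.basis.repr u 4 * hl0 + D.basis.repr l 1 * q * hB
          exact (mul_eq_zero.mp h5).resolve_right hA
        refine funzero ?_ ?_ ?_ ?_ ?_ ?_ <;>
          simp only [mulc0, mulc1, mulc2, mulc3, mulc4, mulc5, Fin.reduceEq, reduceIte] <;>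
          (first
            | ring1
            | linear_combination hl0
            | linear_combination -hl0
            | linear_combination hl42)
      · intro h
        have c1 := congrFun h 1
        have c4 := congrFun h 4
        simp only [mulc1, mulc4, Pi.zero_apply, Fin.reduceEq, reduceIte,
          mul_one, mul_zero, add_zero, zero_add, zero_sub, mul_neg, neg_neg] at c1 c4
        have hl0 : D.basis.repr l 0 = 0 := c1
        have hl42 : q * D.basis.repr l 1 + D.basis.repr l 2 = 0 := by linear_combination c4
        refine funzero ?_ ?_ ?_ ?_ ?_ ?_ <;>
          simp only [mulc0, mulc1, mulc2, mulc3, mulc4, mulc5]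
        · linear_combination D.basis.repr u 0 * hl0
        · linear_combination D.basis.repr u 1 * hl0 + D.basis.repr l 1 * h0
        · linear_combination D.basis.repr u 2 * hl0 + D.basis.repr l 2 * h0
        · linear_combination D.basis.repr u 3 * hl0 + D.basis.repr l 3 * h0
        · linear_combination D.basis.repr u 4 * hl0 + D.basis.repr l 4 * h0
            - D.basis.repr l 1 * q * hB + D.basis.repr u 1 * hl42
        · linear_combination D.basis.repr u 5 * hl0 + D.basis.repr l 5 * h0
            + D.basis.repr l 1 * hC + D.basis.repr l 3 * hB
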